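/- Let Φ be a map from a neighborhood of the origin in ℝ³ to ℝ³ which is differentiable with Φ(0) = 0 and whose derivative DΦ is Lipschitz continuous on that neighborhood. Let ε > 0 and let γ : [0,ε) → ℝ³ be twice continuously differentiable with γ(0) = 0 and DΦ(0)(γ'(0)) = −γ'(0). Define β : (−ε,ε) → ℝ³ by β(t) = γ(t) for t ≥ 0 and β(t) = Φ(γ(−t)) for t < 0. Then there is a neighborhood of 0 on which β is differentiable and its derivative β' is Lipschitz continuous (i.e. β is of class C^{1,1} near 0). -/

import Mathlib

open Set


/-- The doubled curve `γ ∪ Φ(γ)` obtained by reflecting a `C²` curve `γ` (meeting the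
surface orthogonally, i.e. `DΦ(0)(γ'(0)) = -γ'(0)`) across a surface via a reflection
map `Φ` with Lipschitz derivative is a `C^{1,1}` curve near the corner. -/
theorem stmt_7 (U : Set (EuclideanSpace ℝ (Fin 3))) (hU : U ∈ nhds (0 : EuclideanSpace ℝ (Fin 3)))
    (Φ : EuclideanSpace ℝ (Fin 3) → EuclideanSpace ℝ (Fin 3))
    (hΦdiff : ∀ y ∈ U, DifferentiableAt ℝ Φ y)
    (lam : NNReal) (hΦlip : LipschitzOnWith lam (fun y => fderiv ℝ Φ y) U)
    (hΦ0 : Φ 0 = 0)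
    (ε : ℝ) (hε : 0 < ε)
    (γ : ℝ → EuclideanSpace ℝ (Fin 3))
    (hγ : ContDiffOn ℝ 2 γ (Set.Ico 0 ε))
    (hγ0 : γ 0 = 0)
    (hrefl : fderiv ℝ Φ 0 (derivWithin γ (Set.Ico 0 ε) 0)
      = -derivWithin γ (Set.Ico 0 ε) 0)
    (β : ℝ → EuclideanSpace ℝ (Fin 3))
    (hβ : ∀ t, β t = if 0 ≤ t then γ t else Φ (γ (-t))) :
    ∃ δ > 0, ∃ β' : ℝ → EuclideanSpace ℝ (Fin 3), ∃ K : NNReal,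
      (∀ t ∈ Set.Ioo (-δ) δ, HasDerivAt β (β' t) t) ∧
      LipschitzOnWith K β' (Set.Ioo (-δ) δ) := by
  classical
  have h0U : (0 : EuclideanSpace ℝ (Fin 3)) ∈ U := mem_of_mem_nhds hU
  set g : ℝ → EuclideanSpace ℝ (Fin 3) := derivWithin γ (Ico 0 ε) with hgdef
  have hγd : DifferentiableOn ℝ γ (Ico 0 ε) := hγ.differentiableOn two_ne_zero
  have hg1 : ContDiffOn ℝ 1 g (Ico 0 ε) :=
    hγ.derivWithin (uniqueDiffOn_Ico 0 ε) (by norm_num)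
  have hgd : DifferentiableOn ℝ g (Ico 0 ε) := hg1.differentiableOn one_ne_zero
  have hgc : ContinuousOn g (Ico 0 ε) := hg1.continuousOn
  have hg'c : ContinuousOn (derivWithin g (Ico 0 ε)) (Ico 0 ε) :=
    hg1.continuousOn_derivWithin (uniqueDiffOn_Ico 0 ε) le_rfl
  -- choose δ₁ so that γ maps small times into U
  have hcont : ContinuousWithinAt γ (Ico 0 ε) 0 := hγ.continuousOn 0 ⟨le_refl 0, hε⟩
  have hpre : γ ⁻¹' U ∈ nhdsWithin 0 (Ico 0 ε) := hcont (by rw [hγ0]; exact hU)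
  rw [Metric.mem_nhdsWithin_iff] at hpre
  obtain ⟨δ₁, hδ₁pos, hδ₁⟩ := hpre
  set δ : ℝ := min δ₁ ε / 2 with hδdef
  have hδpos : 0 < δ := by positivity
  have hδε : δ < ε := by
    have := min_le_right δ₁ ε; simp only [hδdef]; linarith
  have hδδ₁ : δ < δ₁ := by
    have := min_le_left δ₁ ε; simp only [hδdef]; linarith
  have hsub : Icc (0:ℝ) δ ⊆ Ico 0 ε := fun x hx => ⟨hx.1, lt_of_le_of_lt hx.2 hδε⟩
  have hmemU : ∀ x ∈ Icc (0:ℝ) δ, γ x ∈ U := by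
    intro x hx
    apply hδ₁
    refine ⟨?_, hsub hx⟩
    rw [Metric.mem_ball, Real.dist_eq, sub_zero, abs_of_nonneg hx.1]
    exact lt_of_le_of_lt hx.2 hδδ₁
  -- bounds on compact [0, δ]
  obtain ⟨Lγ, hLγ⟩ : ∃ C, ∀ x ∈ Icc (0:ℝ) δ, ‖g x‖ ≤ C :=
    isCompact_Icc.exists_bound_of_continuousOn (hgc.mono hsub)
  have hLγ0 : 0 ≤ Lγ := le_trans (norm_nonneg _) (hLγ 0 ⟨le_rfl, le_of_lt hδpos⟩)
  obtain ⟨Kg, hKgb⟩ : ∃ C, ∀ x ∈ Icc (0:ℝ) δ, ‖derivWithin g (Ico 0 ε) x‖ ≤ C :=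
    isCompact_Icc.exists_bound_of_continuousOn (hg'c.mono hsub)
  have hKg0 : 0 ≤ Kg := le_trans (norm_nonneg _) (hKgb 0 ⟨le_rfl, le_of_lt hδpos⟩)
  -- Lipschitz estimates on [0, δ]
  have hγlip : ∀ x ∈ Icc (0:ℝ) δ, ∀ y ∈ Icc (0:ℝ) δ, ‖γ y - γ x‖ ≤ Lγ * ‖y - x‖ := by
    intro x hx y hy
    exact (convex_Icc 0 δ).norm_image_sub_le_of_norm_hasDerivWithin_le
      (fun z hz => ((hγd z (hsub hz)).hasDerivWithinAt).mono hsub)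
      (fun z hz => hLγ z hz) hx hy
  have hglip : ∀ x ∈ Icc (0:ℝ) δ, ∀ y ∈ Icc (0:ℝ) δ, ‖g y - g x‖ ≤ Kg * ‖y - x‖ := by
    intro x hx y hy
    exact (convex_Icc 0 δ).norm_image_sub_le_of_norm_hasDerivWithin_le
      (fun z hz => ((hgd z (hsub hz)).hasDerivWithinAt).mono hsub)
      (fun z hz => hKgb z hz) hx hy
  set A : EuclideanSpace ℝ (Fin 3) → (EuclideanSpace ℝ (Fin 3) →L[ℝ] EuclideanSpace ℝ (Fin 3)) :=
    fun y => fderiv ℝ Φ y with hAdef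
  set MA : ℝ := ‖A 0‖ + lam * (Lγ * δ) with hMAdef
  have hγnorm : ∀ x ∈ Icc (0:ℝ) δ, ‖γ x‖ ≤ Lγ * δ := by
    intro x hx
    have := hγlip 0 ⟨le_rfl, le_of_lt hδpos⟩ x hx
    rw [hγ0, sub_zero, sub_zero] at this
    refine this.trans ?_
    have : ‖x‖ ≤ δ := by rw [Real.norm_eq_abs, abs_of_nonneg hx.1]; exact hx.2
    nlinarith
  have hMA : ∀ x ∈ Icc (0:ℝ) δ, ‖A (γ x)‖ ≤ MA := by
    intro x hx
    have hd : dist (A (γ x)) (A 0) ≤ lam * dist (γ x) 0 :=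
      hΦlip.dist_le_mul (γ x) (hmemU x hx) 0 h0U
    rw [dist_eq_norm, dist_eq_norm, sub_zero] at hd
    have h1 : ‖A (γ x)‖ ≤ ‖A 0‖ + ‖A (γ x) - A 0‖ := by
      have := norm_sub_norm_le (A (γ x)) (A 0); linarith
    have h2 : (lam : ℝ) * ‖γ x‖ ≤ lam * (Lγ * δ) := by
      have := hγnorm x hx
      nlinarith [lam.coe_nonneg]
    rw [hMAdef]; linarith
  have hMA0 : 0 ≤ MA := by rw [hMAdef]; positivity
  -- key estimate on the negative branch
  set Kn : ℝ := MA * Kg + lam * Lγ * Lγ with hKndef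
  have hKn0 : 0 ≤ Kn := by rw [hKndef]; positivity
  have hneg : ∀ x ∈ Icc (0:ℝ) δ, ∀ y ∈ Icc (0:ℝ) δ,
      ‖A (γ x) (g x) - A (γ y) (g y)‖ ≤ Kn * ‖x - y‖ := by
    intro x hx y hy
    have h1 : ‖A (γ x) (g x) - A (γ x) (g y)‖ ≤ MA * (Kg * ‖x - y‖) := by
      rw [← map_sub]
      refine ((A (γ x)).le_opNorm _).trans ?_
      exact mul_le_mul (hMA x hx) (hglip y hy x hx) (norm_nonneg _) hMA0
    have h2 : ‖A (γ x) (g y) - A (γ y) (g y)‖ ≤ (lam * (Lγ * ‖x - y‖)) * Lγ := by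
      have hAlip : ‖A (γ x) - A (γ y)‖ ≤ lam * (Lγ * ‖x - y‖) := by
        have hd : dist (A (γ x)) (A (γ y)) ≤ lam * dist (γ x) (γ y) :=
          hΦlip.dist_le_mul (γ x) (hmemU x hx) (γ y) (hmemU y hy)
        rw [dist_eq_norm, dist_eq_norm] at hd
        refine hd.trans ?_
        exact mul_le_mul_of_nonneg_left (hγlip y hy x hx) lam.coe_nonneg
      calc ‖A (γ x) (g y) - A (γ y) (g y)‖ = ‖(A (γ x) - A (γ y)) (g y)‖ := by
            rw [ContinuousLinearMap.sub_apply]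
        _ ≤ ‖A (γ x) - A (γ y)‖ * ‖g y‖ := (A (γ x) - A (γ y)).le_opNorm _
        _ ≤ (lam * (Lγ * ‖x - y‖)) * Lγ :=
            mul_le_mul hAlip (hLγ y hy) (norm_nonneg _)
              (by positivity)
    calc ‖A (γ x) (g x) - A (γ y) (g y)‖
        ≤ ‖A (γ x) (g x) - A (γ x) (g y)‖ + ‖A (γ x) (g y) - A (γ y) (g y)‖ :=
          norm_sub_le_norm_sub_add_norm_sub _ _ _
      _ ≤ MA * (Kg * ‖x - y‖) + (lam * (Lγ * ‖x - y‖)) * Lγ := add_le_add h1 h2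
      _ = Kn * ‖x - y‖ := by rw [hKndef]; ring
  -- derivative of γ at interior points
  have hder : ∀ u ∈ Ioo (0:ℝ) ε, HasDerivAt γ (g u) u := by
    intro u hu
    have h1 : Ico (0:ℝ) ε ∈ nhds u := Ico_mem_nhds hu.1 hu.2
    have h2 := ((hγd u ⟨le_of_lt hu.1, hu.2⟩).differentiableAt h1).hasDerivAt
    rwa [hgdef, derivWithin_of_mem_nhds h1]
  -- the candidate derivative function
  set β' : ℝ → EuclideanSpace ℝ (Fin 3) :=
    fun t => if 0 ≤ t then g t else -(A (γ (-t)) (g (-t))) with hβ'def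
  have hβ'neg : ∀ x ∈ Icc (-δ) (0:ℝ), β' x = -(A (γ (-x)) (g (-x))) := by
    intro x hx
    rw [hβ'def]
    dsimp only
    split_ifs with h
    · have hx0 : x = 0 := le_antisymm hx.2 h
      subst hx0
      rw [neg_zero, hγ0]
      rw [hgdef] at hrefl ⊢
      rw [hAdef]
      rw [hrefl, neg_neg]
    · rfl
  refine ⟨δ, hδpos, β', Real.toNNReal (max Kg Kn), ?_, ?_⟩
  · -- differentiability
    intro t ht
    rcases lt_trichotomy t 0 with hlt | heq | hgt
    · -- t < 0
      have hu : (-t) ∈ Ioo (0:ℝ) δ := ⟨by linarith, by linarith [ht.1]⟩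
      have huε : (-t) ∈ Ioo (0:ℝ) ε := ⟨hu.1, lt_trans hu.2 hδε⟩
      have h1 : HasDerivAt γ (g (-t)) (-t) := hder _ huε
      have h2 : HasDerivAt (fun s : ℝ => -s) (-1) t := hasDerivAt_neg t
      have h3 : HasDerivAt (fun s : ℝ => γ (-s)) ((-1 : ℝ) • g (-t)) t :=
        HasDerivAt.scomp t h1 h2
      have hγtU : γ (-t) ∈ U := hmemU _ ⟨le_of_lt hu.1, le_of_lt hu.2⟩
      have h4 : HasFDerivAt Φ (A (γ (-t))) (γ (-t)) := (hΦdiff _ hγtU).hasFDerivAt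
      have h5 : HasDerivAt (fun s : ℝ => Φ (γ (-s))) (A (γ (-t)) ((-1 : ℝ) • g (-t))) t :=
        h4.comp_hasDerivAt t h3
      have h6 : β =ᶠ[nhds t] fun s : ℝ => Φ (γ (-s)) := by
        filter_upwards [Iio_mem_nhds hlt] with s hs
        rw [hβ s, if_neg (not_le.2 hs)]
      have h7 := h5.congr_of_eventuallyEq h6
      have hb : β' t = A (γ (-t)) ((-1 : ℝ) • g (-t)) := by
        rw [hβ'def]
        dsimp only
        rw [if_neg (not_le.2 hlt), neg_one_smul, map_neg]
      rw [hb]; exact h7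
    · -- t = 0
      subst heq
      have hR0 : HasDerivWithinAt γ (g 0) (Ico 0 ε) 0 := by
        rw [hgdef]; exact (hγd 0 ⟨le_rfl, hε⟩).hasDerivWithinAt
      have hmem : Ico (0:ℝ) ε ∈ nhdsWithin 0 (Ici (0:ℝ)) :=
        Ico_mem_nhdsGE_of_mem ⟨le_rfl, hε⟩
      have hR : HasDerivWithinAt γ (g 0) (Ici 0) 0 := hR0.mono_of_mem_nhdsWithin hmem
      have hRβ : HasDerivWithinAt β (g 0) (Ici 0) 0 := by
        refine hR.congr (fun s hs => ?_) ?_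
        · rw [hβ s, if_pos (mem_Ici.1 hs)]
        · rw [hβ 0, if_pos le_rfl]
      have hnegd : HasDerivWithinAt (fun s : ℝ => -s) (-1) (Iic (0:ℝ)) 0 :=
        (hasDerivAt_neg (0:ℝ)).hasDerivWithinAt
      have hmaps : MapsTo (fun s : ℝ => -s) (Iic (0:ℝ)) (Ici (0:ℝ)) :=
        fun s hs => mem_Ici.2 (neg_nonneg.2 (mem_Iic.1 hs))
      have hL1 : HasDerivWithinAt (fun s : ℝ => γ (-s)) ((-1 : ℝ) • g 0) (Iic 0) 0 :=
        HasDerivWithinAt.scomp_of_eq (hg := hR) (hh := hnegd) (hst := hmaps) (hy := by norm_num)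
      have hΦd0 : HasFDerivAt Φ (A 0) 0 := (hΦdiff 0 h0U).hasFDerivAt
      have hL2c : HasDerivWithinAt (Φ ∘ fun s : ℝ => γ (-s)) (A 0 ((-1 : ℝ) • g 0)) (Iic 0) 0 :=
        HasFDerivAt.comp_hasDerivWithinAt_of_eq (hl := hΦd0) (hf := hL1)
          (hy := by simp [hγ0])
      have hL2 : HasDerivWithinAt (fun s : ℝ => Φ (γ (-s))) (A 0 ((-1 : ℝ) • g 0)) (Iic 0) 0 :=
        hL2c
      have hval : A 0 ((-1 : ℝ) • g 0) = g 0 := by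
        rw [neg_one_smul, map_neg, hrefl, neg_neg]
      rw [hval] at hL2
      have hLβ : HasDerivWithinAt β (g 0) (Iic 0) 0 := by
        refine hL2.congr (fun s hs => ?_) ?_
        · rw [hβ s]
          split_ifs with h
          · have hs0 : s = 0 := le_antisymm hs h
            subst hs0
            simp [hγ0, hΦ0]
          · rfl
        · rw [hβ 0, if_pos le_rfl]
          simp [hγ0, hΦ0]
      have hcomb : HasDerivWithinAt β (g 0) (Iic 0 ∪ Ici 0) 0 := hLβ.union hRβ
      rw [Iic_union_Ici, hasDerivWithinAt_univ] at hcomb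
      have hb0 : β' 0 = g 0 := by rw [hβ'def]; exact if_pos le_rfl
      rw [hb0]; exact hcomb
    · -- t > 0
      have h1 : HasDerivAt γ (g t) t := hder t ⟨hgt, lt_trans ht.2 hδε⟩
      have h6 : β =ᶠ[nhds t] γ := by
        filter_upwards [Ioi_mem_nhds hgt] with s hs
        rw [hβ s, if_pos (le_of_lt hs)]
      have h7 := h1.congr_of_eventuallyEq h6
      have hb : β' t = g t := by
        rw [hβ'def]; exact if_pos (le_of_lt hgt)
      rw [hb]; exact h7
  · -- Lipschitz bound
    set M : ℝ := max Kg Kn with hMdef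
    have hM0 : (0:ℝ) ≤ M := le_trans hKg0 (le_max_left _ _)
    have hPos : ∀ a ∈ Icc (0:ℝ) δ, ∀ b ∈ Icc (0:ℝ) δ, ‖β' a - β' b‖ ≤ M * |a - b| := by
      intro a ha b hb
      have hba : β' a = g a := by rw [hβ'def]; exact if_pos ha.1
      have hbb : β' b = g b := by rw [hβ'def]; exact if_pos hb.1
      rw [hba, hbb]
      have h1 := hglip b hb a ha
      rw [Real.norm_eq_abs] at h1
      refine h1.trans ?_
      exact mul_le_mul_of_nonneg_right (le_max_left _ _) (abs_nonneg _)
    have hNeg : ∀ a ∈ Icc (-δ) (0:ℝ), ∀ b ∈ Icc (-δ) (0:ℝ),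
        ‖β' a - β' b‖ ≤ M * |a - b| := by
      intro a ha b hb
      have hna : (-a) ∈ Icc (0:ℝ) δ := ⟨neg_nonneg.2 ha.2, by linarith [ha.1]⟩
      have hnb : (-b) ∈ Icc (0:ℝ) δ := ⟨neg_nonneg.2 hb.2, by linarith [hb.1]⟩
      rw [hβ'neg a ha, hβ'neg b hb, neg_sub_neg]
      have h1 := hneg (-b) hnb (-a) hna
      have h2 : (-b) - (-a) = a - b := by ring
      rw [h2, Real.norm_eq_abs] at h1
      refine h1.trans ?_
      exact mul_le_mul_of_nonneg_right (le_max_right _ _) (abs_nonneg _)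
    have h0p : (0:ℝ) ∈ Icc (0:ℝ) δ := ⟨le_rfl, le_of_lt hδpos⟩
    have h0n : (0:ℝ) ∈ Icc (-δ) (0:ℝ) := ⟨by linarith, le_rfl⟩
    rw [lipschitzOnWith_iff_dist_le_mul]
    intro x hx y hy
    rw [Real.coe_toNNReal _ hM0, dist_eq_norm, Real.dist_eq]
    rcases le_or_gt 0 x with hx0 | hx0 <;> rcases le_or_gt 0 y with hy0 | hy0
    · exact hPos x ⟨hx0, le_of_lt hx.2⟩ y ⟨hy0, le_of_lt hy.2⟩
    · -- 0 ≤ x, y < 0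
      have t1 := hPos x ⟨hx0, le_of_lt hx.2⟩ 0 h0p
      have t2 := hNeg 0 h0n y ⟨le_of_lt hy.1, le_of_lt hy0⟩
      have tri : ‖β' x - β' y‖ ≤ ‖β' x - β' 0‖ + ‖β' 0 - β' y‖ :=
        norm_sub_le_norm_sub_add_norm_sub _ _ _
      rw [sub_zero, abs_of_nonneg hx0] at t1
      have e2 : |(0:ℝ) - y| = -y := by
        rw [abs_of_nonneg (by linarith : (0:ℝ) ≤ 0 - y)]; ring
      rw [e2] at t2
      rw [abs_of_nonneg (by linarith : (0:ℝ) ≤ x - y)]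
      have hring : M * (x - y) = M * x + M * (-y) := by ring
      linarith
    · -- x < 0, 0 ≤ y
      have t1 := hNeg x ⟨le_of_lt hx.1, le_of_lt hx0⟩ 0 h0n
      have t2 := hPos 0 h0p y ⟨hy0, le_of_lt hy.2⟩
      have tri : ‖β' x - β' y‖ ≤ ‖β' x - β' 0‖ + ‖β' 0 - β' y‖ :=
        norm_sub_le_norm_sub_add_norm_sub _ _ _
      rw [sub_zero, abs_of_nonpos (le_of_lt hx0), ] at t1
      have e2 : |(0:ℝ) - y| = y := by
        rw [abs_of_nonpos (by linarith : (0:ℝ) - y ≤ 0)]; ring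
      rw [e2] at t2
      rw [abs_of_nonpos (by linarith : x - y ≤ 0)]
      have hring : M * -(x - y) = M * (-x) + M * y := by ring
      linarith
    · exact hNeg x ⟨le_of_lt hx.1, le_of_lt hx0⟩ y ⟨le_of_lt hy.1, le_of_lt hy0⟩
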